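/- arXiv:2212.09066 — 3 statements merged into one kernel-verified Lean document; each statement's English description precedes it below -/
import Mathlib

section
/- Every finite nonempty rich word w over a finite alphabet admits a factorization w = w_p w_{p-1} ⋯ w_1 into distinct nonempty palindromes such that for each i ∈ {1, …, p}, w_i is the longest palindromic suffix of w_p w_{p-1} ⋯ w_i. -/
/-- The set of palindromic factors of a word `w` (including the empty word). -/
def palFactors {α : Type*} [DecidableEq α] (w : List α) : Finset (List α) :=
  ((w.inits.flatMap List.tails).filter fun u => u.reverse = u).toFinset

/-- A word is rich if it has `|w| + 1` distinct palindromic factors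
(including the empty word). -/
def Rich {α : Type*} [DecidableEq α] (w : List α) : Prop :=
  (palFactors w).card = w.length + 1

/-- `s` is the longest palindromic suffix of `u`: a nonempty palindromic suffix of
maximal length. -/
def IsLPS {α : Type*} (u s : List α) : Prop :=
  s ≠ [] ∧ s.reverse = s ∧ s <:+ u ∧
    ∀ t : List α, t <:+ u → t.reverse = t → t.length ≤ s.length

/-- `ws = [w_p, …, w_1]` is a UPS-factorization of `w`: distinct nonempty
palindromes whose concatenation is `w`, where each `w_i` is the longest palindromic
suffix of `w_p ⋯ w_i`. -/
def UPS {α : Type*} (w : List α) (ws : List (List α)) : Prop :=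
  ws ≠ [] ∧ ws.flatten = w ∧ ws.Pairwise (· ≠ ·) ∧
    ∀ i : Fin ws.length, IsLPS ((ws.take (i + 1)).flatten) ws[i]

section Aux

variable {α : Type*} [DecidableEq α]

lemma mem_palFactors {w s : List α} :
    s ∈ palFactors w ↔ s <:+: w ∧ s.reverse = s := by
  simp only [palFactors, List.mem_toFinset, List.mem_filter, List.mem_flatMap,
    List.mem_inits, List.mem_tails, decide_eq_true_eq]
  constructor
  · rintro ⟨⟨u, hu, hs⟩, hp⟩
    exact ⟨hs.isInfix.trans hu.isInfix, hp⟩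
  · rintro ⟨⟨p, q, hpq⟩, hp⟩
    exact ⟨⟨p ++ s, ⟨q, by simpa using hpq⟩, List.suffix_append p s⟩, hp⟩

lemma palFactors_mono {u w : List α} (h : u <:+: w) :
    palFactors u ⊆ palFactors w := fun s hs => by
  rw [mem_palFactors] at *
  exact ⟨hs.1.trans h, hs.2⟩

lemma suffix_eq_of_length {s t w : List α} (hs : s <:+ w) (ht : t <:+ w)
    (h : s.length = t.length) : s = t := by
  rw [← List.reverse_prefix] at hs ht
  have := (List.prefix_of_prefix_length_le hs ht (by simp [h])).eq_of_length (by simp [h])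
  simpa using congrArg List.reverse this

/-- Existence of the longest palindromic suffix. -/
lemma exists_isLPS (u : List α) (hu : u ≠ []) : ∃ s, IsLPS u s := by
  have hne : ((u.tails.filter fun t => t.reverse = t).toFinset).Nonempty := by
    refine ⟨[u.getLast hu], ?_⟩
    simp only [List.mem_toFinset, List.mem_filter, List.mem_tails, decide_eq_true_eq]
    refine ⟨?_, by simp⟩
    conv_rhs => rw [← List.dropLast_append_getLast hu]
    exact List.suffix_append _ _
  obtain ⟨s, hsmem, hmax⟩ := Finset.exists_max_image _ List.length hne
  simp only [List.mem_toFinset, List.mem_filter, List.mem_tails, decide_eq_true_eq] at hsmem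
  refine ⟨s, ?_, hsmem.2, hsmem.1, fun t ht hp => ?_⟩
  · intro h
    have := hmax [u.getLast hu] (by
      simp only [List.mem_toFinset, List.mem_filter, List.mem_tails, decide_eq_true_eq]
      refine ⟨?_, by simp⟩
      conv_rhs => rw [← List.dropLast_append_getLast hu]
      exact List.suffix_append _ _)
    simp [h] at this
  · exact hmax t (by
      simp only [List.mem_toFinset, List.mem_filter, List.mem_tails, decide_eq_true_eq]
      exact ⟨ht, hp⟩)

lemma isLPS_unique {u s t : List α} (hs : IsLPS u s) (ht : IsLPS u t) : s = t :=
  suffix_eq_of_length hs.2.2.1 ht.2.2.1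
    (le_antisymm (ht.2.2.2 s hs.2.2.1 hs.2.1) (hs.2.2.2 t ht.2.2.1 ht.2.1))

/-- An infix of `u ++ [a]` is a suffix or an infix of `u`. -/
lemma infix_concat {t u : List α} {a : α} (h : t <:+: u ++ [a]) :
    t <:+ u ++ [a] ∨ t <:+: u := by
  obtain ⟨p, q, hpq⟩ := h
  rcases List.eq_nil_or_concat q with rfl | ⟨q', b, rfl⟩
  · left; exact ⟨p, by simpa using hpq⟩
  · right
    have : p ++ t ++ q' = u := by
      have := congrArg List.dropLast hpq
      simpa [List.concat_eq_append, ← List.append_assoc, List.dropLast_concat] using this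
    exact ⟨p, q', this⟩

/-- Each letter adds at most one new palindromic factor, namely the LPS. -/
lemma palFactors_concat_subset {u : List α} {a : α} {s : List α}
    (hs : IsLPS (u ++ [a]) s) :
    palFactors (u ++ [a]) ⊆ insert s (palFactors u) := by
  intro t ht
  rw [mem_palFactors] at ht
  obtain ⟨hinf, hpal⟩ := ht
  rcases infix_concat hinf with hsuf | hinf'
  · rcases eq_or_ne t [] with rfl | htne
    · simp [mem_palFactors]
    · -- t is a nonempty palindromic suffix of u ++ [a]
      have hlen : t.length ≤ s.length := hs.2.2.2 t hsuf hpal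
      rcases eq_or_lt_of_le hlen with heq | hlt
      · exact Finset.mem_insert.2 (Or.inl (suffix_eq_of_length hsuf hs.2.2.1 heq))
      · -- t is a proper suffix of s, hence a prefix of s, hence an infix of u
        refine Finset.mem_insert.2 (Or.inr ?_)
        have hts : t <:+ s := by
          rw [← List.reverse_prefix] at hsuf ⊢
          have hs' : s.reverse <+: (u ++ [a]).reverse := List.reverse_prefix.2 hs.2.2.1
          exact List.prefix_of_prefix_length_le hsuf hs' (by simpa using hlen)
        have htp : t <+: s := by
          rw [← List.reverse_suffix, hpal, hs.2.1]; exact hts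
        obtain ⟨r, hr⟩ := htp
        obtain ⟨p, hp⟩ := hs.2.2.1
        have hrne : r ≠ [] := by
          intro h
          subst h
          simp only [List.append_nil] at hr
          have := congrArg List.length hr
          omega
        rw [mem_palFactors]
        refine ⟨?_, hpal⟩
        obtain ⟨r', b, rfl⟩ := (List.eq_nil_or_concat r).resolve_left hrne
        rw [List.concat_eq_append] at hr
        have key : (p ++ t ++ r') ++ [b] = u ++ [a] := by
          rw [List.append_assoc, List.append_assoc, hr]; exact hp
        have hu' : p ++ t ++ r' = u := by
          have h2 := congrArg List.dropLast key
          rwa [List.dropLast_concat, List.dropLast_concat] at h2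
        exact ⟨p, r', hu'⟩
  · exact Finset.mem_insert.2 (Or.inr (mem_palFactors.2 ⟨hinf', hpal⟩))

lemma palFactors_nil : palFactors ([] : List α) = {[]} := by
  simp [palFactors]

lemma card_palFactors_le (u : List α) : (palFactors u).card ≤ u.length + 1 := by
  induction u using List.reverseRecOn with
  | nil => simp [palFactors_nil]
  | append_singleton u a ih =>
    obtain ⟨s, hs⟩ := exists_isLPS (u ++ [a]) (by simp)
    calc (palFactors (u ++ [a])).card ≤ (insert s (palFactors u)).card :=
          Finset.card_le_card (palFactors_concat_subset hs)
      _ ≤ (palFactors u).card + 1 := Finset.card_insert_le _ _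
      _ ≤ (u ++ [a]).length + 1 := by simp; omega

lemma rich_concat {u : List α} {a : α} (h : Rich (u ++ [a])) : Rich u := by
  obtain ⟨s, hs⟩ := exists_isLPS (u ++ [a]) (by simp)
  have h1 : (palFactors (u ++ [a])).card ≤ (palFactors u).card + 1 :=
    le_trans (Finset.card_le_card (palFactors_concat_subset hs)) (Finset.card_insert_le _ _)
  have h2 := card_palFactors_le u
  unfold Rich at *
  simp at h
  omega

lemma rich_prefix {u w : List α} (h : u <+: w) (hw : Rich w) : Rich u := by
  induction w using List.reverseRecOn with
  | nil => rw [List.prefix_nil] at h; subst h; exact hw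
  | append_singleton v a ih =>
    rcases eq_or_ne u (v ++ [a]) with rfl | hne
    · exact hw
    · refine ih ?_ (rich_concat hw)
      have hlen : u.length ≤ v.length := by
        have := h.length_le
        simp at this
        rcases Nat.lt_or_ge u.length (v.length + 1) with h' | h'
        · omega
        · exact absurd (h.eq_of_length (by simp; omega)) hne
      exact List.prefix_of_prefix_length_le h (by simp) (by simpa using hlen)

/-- In a rich word, the LPS is a *new* palindrome: not a factor of `dropLast`. -/
lemma lps_not_mem_dropLast {w s : List α} (hw : w ≠ []) (hrich : Rich w)
    (hs : IsLPS w s) : s ∉ palFactors w.dropLast := by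
  intro hmem
  have hconcat : w.dropLast ++ [w.getLast hw] = w := List.dropLast_append_getLast hw
  have hsub : palFactors w ⊆ insert s (palFactors w.dropLast) := by
    have := palFactors_concat_subset (u := w.dropLast) (a := w.getLast hw)
      (s := s) (by rw [hconcat]; exact hs)
    rwa [hconcat] at this
  have hsub' : palFactors w ⊆ palFactors w.dropLast := by
    intro t ht
    rcases Finset.mem_insert.1 (hsub ht) with rfl | h
    · exact hmem
    · exact h
  have h1 : (palFactors w).card ≤ (palFactors w.dropLast).card := Finset.card_le_card hsub'
  have h2 := card_palFactors_le w.dropLast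
  have h3 : w.dropLast.length = w.length - 1 := by simp
  have h4 : 1 ≤ w.length := List.length_pos_iff.2 hw
  unfold Rich at hrich
  omega

lemma main_aux (n : ℕ) : ∀ w : List α, w.length ≤ n → w ≠ [] → Rich w →
    ∃ ws : List (List α), UPS w ws := by
  induction n with
  | zero => intro w hlen hne _; exact absurd (List.length_eq_zero_iff.1 (by omega)) hne
  | succ n ih =>
    intro w hlen hne hrich
    obtain ⟨s, hs⟩ := exists_isLPS w hne
    obtain ⟨u, hu⟩ := hs.2.2.1
    have hslen : 1 ≤ s.length := List.length_pos_iff.2 hs.1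
    rcases eq_or_ne u [] with rfl | hune
    · -- w = s, single factor
      simp at hu
      refine ⟨[s], by simp, by simp [hu], by simp, ?_⟩
      intro i
      have h2 : (i : ℕ) < 1 := by simpa using i.2
      have h0 : (i : ℕ) = 0 := by omega
      simp only [Fin.getElem_fin, h0]
      simpa [hu] using hs
    · -- w = u ++ s with u nonempty
      have hupre : u <+: w := ⟨s, hu⟩
      have hurich : Rich u := rich_prefix hupre hrich
      have hulen : u.length ≤ n := by
        have := congrArg List.length hu
        simp at this
        omega
      obtain ⟨ws', hws'ne, hflat, hpw, hlps⟩ := ih u hulen hune hurich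
      refine ⟨ws' ++ [s], by simp, by simp [hflat, hu], ?_, ?_⟩
      · rw [List.pairwise_append]
        refine ⟨hpw, by simp, ?_⟩
        intro a ha b hb
        simp at hb
        rw [hb]
        -- a is a palindromic factor of u, hence of w.dropLast; s is not
        intro hab
        have hinf : a <:+: u := hflat ▸ List.infix_of_mem_flatten ha
        have hapal : a.reverse = a := by rw [hab]; exact hs.2.1
        have hud : u <+: w.dropLast := by
          obtain ⟨s', c, hs'⟩ := (List.eq_nil_or_concat s).resolve_left hs.1
          refine ⟨s', ?_⟩
          rw [← hu, hs', List.concat_eq_append, ← List.append_assoc, List.dropLast_concat]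
        have hmem : a ∈ palFactors w.dropLast :=
          palFactors_mono hud.isInfix (mem_palFactors.2 ⟨hinf, hapal⟩)
        rw [hab] at hmem
        exact lps_not_mem_dropLast hne hrich hs hmem
      · intro i
        have hilen : (i : ℕ) < ws'.length + 1 := by simpa using i.2
        rcases Nat.lt_or_ge (i : ℕ) ws'.length with hi | hi
        · have htake : (ws' ++ [s]).take ((i : ℕ) + 1) = ws'.take ((i : ℕ) + 1) :=
            List.take_append_of_le_length (by omega)
          have hget : (ws' ++ [s])[(i : ℕ)] = ws'[(i : ℕ)] :=
            List.getElem_append_left (by omega)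
          simp only [Fin.getElem_fin]
          rw [htake, hget]
          exact hlps ⟨i, hi⟩
        · have hieq : (i : ℕ) = ws'.length := by omega
          have htake : (ws' ++ [s]).take ((i : ℕ) + 1) = ws' ++ [s] := by
            apply List.take_of_length_le
            simp [hieq]
          have hget : (ws' ++ [s])[(i : ℕ)]'(by simp; omega) = s :=
            List.getElem_concat_length hieq _
          simp only [Fin.getElem_fin]
          rw [htake, hget]
          simpa [hflat, hu] using hs

end Aux

/-- every finite nonempty rich word admits a UPS-factorization. -/
theorem stmt_9 {α : Type*} [DecidableEq α] (w : List α) (hw : w ≠ [])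
    (hrich : Rich w) : ∃ ws : List (List α), UPS w ws :=
  main_aux w.length w le_rfl hw hrich
end

section
/- If w is a finite nonempty rich word, then the longest palindromic suffix of w occurs exactly once as a factor of w. -/
/-- Number of occurrences of `s` as a factor of `w` (as the number of starting
positions at which `s` occurs). -/
def numOcc {α : Type*} [DecidableEq α] (s w : List α) : ℕ :=
  ((List.range (w.length + 1)).filter fun i => (w.drop i).take s.length = s).length

namespace StmtAux

open List

variable {α : Type*} [DecidableEq α]

lemma mem_palFactors {u w : List α} :
    u ∈ palFactors w ↔ u.reverse = u ∧ u <:+: w := by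
  simp only [palFactors, List.mem_toFinset, List.mem_filter, List.mem_flatMap,
    List.mem_inits, List.mem_tails, decide_eq_true_eq]
  constructor
  · rintro ⟨⟨p, hp, hu⟩, hpal⟩
    exact ⟨hpal, hu.isInfix.trans hp.isInfix⟩
  · rintro ⟨hpal, x, y, hxy⟩
    exact ⟨⟨x ++ u, ⟨y, hxy⟩, List.suffix_append x u⟩, hpal⟩

lemma palFactors_mono {u w : List α} (h : u <:+: w) :
    palFactors u ⊆ palFactors w := by
  intro p hp
  rw [mem_palFactors] at *
  exact ⟨hp.1, hp.2.trans h⟩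

/-- A suffix of a palindrome which is itself a palindrome is also a prefix. -/
lemma prefix_of_suffix_pal {p s : List α} (hp : p.reverse = p) (hs : s.reverse = s)
    (h : p <:+ s) : p <+: s := by
  rw [← List.reverse_suffix, hp, hs]; exact h

/-- Two suffixes of the same list: the shorter is a suffix of the longer. -/
lemma suffix_of_suffix_length_le {p q w : List α} (hp : p <:+ w) (hq : q <:+ w)
    (h : p.length ≤ q.length) : p <:+ q := by
  rw [← List.reverse_prefix] at *
  exact List.prefix_of_prefix_length_le hp hq (by simpa using h)

/-- A strictly shorter prefix of a suffix of `u ++ [a]` is an infix of `u`. -/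
lemma infix_of_prefix_of_suffix_concat {p q u : List α} {a : α}
    (hq : q <:+ u ++ [a]) (hp : p <+: q) (hlt : p.length < q.length) : p <:+: u := by
  obtain ⟨t, ht⟩ := hq
  obtain ⟨r, hr⟩ := hp
  have hrne : r ≠ [] := by
    rintro rfl
    simp only [List.append_nil] at hr
    subst hr
    exact lt_irrefl _ hlt
  obtain ⟨r', b, rfl⟩ : ∃ r' b, r = r' ++ [b] := by
    rcases List.eq_nil_or_concat r with h | ⟨r', b, h⟩
    · exact absurd h hrne
    · exact ⟨r', b, by simpa [List.concat_eq_append] using h⟩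
  have key : (t ++ (p ++ r')) ++ [b] = u ++ [a] := by
    rw [← ht, ← hr]; simp
  have := List.append_inj' key (by simp)
  exact ⟨t, r', by rw [← this.1]; simp⟩

/-- A factor of `u ++ [a]` which is not a factor of `u` is a suffix of `u ++ [a]`. -/
lemma suffix_of_infix_concat {p u : List α} {a : α}
    (h : p <:+: u ++ [a]) (hn : ¬ p <:+: u) : p <:+ u ++ [a] := by
  obtain ⟨x, y, hxy⟩ := h
  rcases List.eq_nil_or_concat y with rfl | ⟨y', b, rfl⟩
  · exact ⟨x, by simpa using hxy⟩
  · exfalso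
    apply hn
    have key : (x ++ p ++ y') ++ [b] = u ++ [a] := by
      rw [← hxy]; simp [List.concat_eq_append]
    have := List.append_inj' key (by simp)
    exact ⟨x, y', by rw [← this.1]⟩

lemma card_new_le_one (u : List α) (a : α) :
    (palFactors (u ++ [a]) \ palFactors u).card ≤ 1 := by
  rw [Finset.card_le_one]
  intro p hp q hq
  simp only [Finset.mem_sdiff, mem_palFactors] at hp hq
  obtain ⟨⟨hppal, hpinf⟩, hpn⟩ := hp
  obtain ⟨⟨hqpal, hqinf⟩, hqn⟩ := hq
  have hpnotu : ¬ p <:+: u := fun h => hpn ⟨hppal, h⟩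
  have hqnotu : ¬ q <:+: u := fun h => hqn ⟨hqpal, h⟩
  have hps : p <:+ u ++ [a] := suffix_of_infix_concat hpinf hpnotu
  have hqs : q <:+ u ++ [a] := suffix_of_infix_concat hqinf hqnotu
  rcases le_total p.length q.length with hle | hle
  · have hsuf : p <:+ q := suffix_of_suffix_length_le hps hqs hle
    rcases eq_or_lt_of_le hle with heq | hlt
    · exact hsuf.eq_of_length heq
    · exact absurd (infix_of_prefix_of_suffix_concat hqs
        (prefix_of_suffix_pal hppal hqpal hsuf) hlt) hpnotu
  · have hsuf : q <:+ p := suffix_of_suffix_length_le hqs hps hle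
    rcases eq_or_lt_of_le hle with heq | hlt
    · exact (hsuf.eq_of_length heq).symm
    · exact absurd (infix_of_prefix_of_suffix_concat hps
        (prefix_of_suffix_pal hqpal hppal hsuf) hlt) hqnotu

lemma card_concat_le (u : List α) (a : α) :
    (palFactors (u ++ [a])).card ≤ (palFactors u).card + 1 := by
  calc (palFactors (u ++ [a])).card
      ≤ (palFactors (u ++ [a]) \ palFactors u).card + (palFactors u).card :=
        Finset.card_le_card_sdiff_add_card
    _ ≤ 1 + (palFactors u).card := by
        exact Nat.add_le_add_right (card_new_le_one u a) _
    _ = (palFactors u).card + 1 := by omega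

lemma card_le (u : List α) : (palFactors u).card ≤ u.length + 1 := by
  induction u using List.reverseRecOn with
  | nil =>
    refine le_trans (Finset.card_le_one.mpr ?_) (by simp)
    intro p hp q hq
    rw [mem_palFactors] at hp hq
    rw [List.infix_nil.mp hp.2, List.infix_nil.mp hq.2]
  | append_singleton u a ih =>
    calc (palFactors (u ++ [a])).card ≤ (palFactors u).card + 1 := card_concat_le u a
      _ ≤ u.length + 1 + 1 := Nat.add_le_add_right ih 1
      _ = (u ++ [a]).length + 1 := by simp

/-- The key lemma: in a rich word `u ++ [a]`, the longest palindromic suffix is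
not a factor of `u`. -/
lemma lps_not_in_prefix {u : List α} {a : α} {s : List α}
    (hrich : Rich (u ++ [a])) (hs : IsLPS (u ++ [a]) s) :
    s ∉ palFactors u := by
  intro hsu
  obtain ⟨hsne, hspal, hssuf, hsmax⟩ := hs
  have hcard : (palFactors (u ++ [a])).card = u.length + 2 := by
    simpa [Rich] using hrich
  have hsub : palFactors (u ++ [a]) ⊆ palFactors u := by
    intro p hp
    rw [mem_palFactors] at hp
    obtain ⟨hppal, hpinf⟩ := hp
    by_cases hpu : p <:+: u
    · exact mem_palFactors.mpr ⟨hppal, hpu⟩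
    · have hps : p <:+ u ++ [a] := suffix_of_infix_concat hpinf hpu
      have hlen : p.length ≤ s.length := hsmax p hps hppal
      have hpsuf : p <:+ s := suffix_of_suffix_length_le hps hssuf hlen
      have hppre : p <+: s := prefix_of_suffix_pal hppal hspal hpsuf
      have hsinf : s <:+: u := (mem_palFactors.mp hsu).2
      exact mem_palFactors.mpr ⟨hppal, hppre.isInfix.trans hsinf⟩
  have := Finset.card_le_card hsub
  have := card_le u
  omega

lemma numOcc_eq_one {w s : List α} (hsne : s ≠ []) (hspal : s.reverse = s)
    (hssuf : s <:+ w) (hwne : w ≠ []) (hnot : s ∉ palFactors w.dropLast) :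
    numOcc s w = 1 := by
  have hslen : s.length ≤ w.length := hssuf.length_le
  have hspos : 0 < s.length := List.length_pos_iff.mpr hsne
  have hnpos : 0 < w.length := List.length_pos_iff.mpr hwne
  have hdroplast : w.dropLast = w.take (w.length - 1) := by
    rw [List.dropLast_eq_take]
  have key : ∀ i ∈ List.range (w.length + 1),
      (decide ((w.drop i).take s.length = s)) = (i == w.length - s.length) := by
    intro i hi
    rw [List.mem_range] at hi
    refine Eq.trans (decide_eq_decide.mpr ?_) rfl
    constructor
    · intro h
      have hlen : s.length = min s.length (w.length - i) := by
        conv_lhs => rw [← h]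
        simp
      by_contra hne
      have hilt : i < w.length - s.length := by omega
      -- s occurs strictly inside, so it is a factor of w.dropLast
      apply hnot
      rw [mem_palFactors]
      refine ⟨hspal, ?_⟩
      have h1 : s <:+ w.take (i + s.length) := by
        rw [List.take_add, h]
        exact List.suffix_append _ _
      have h2 : w.take (i + s.length) <+: w.dropLast := by
        rw [hdroplast]
        have h3 : w.take (i + s.length) = (w.take (w.length - 1)).take (i + s.length) := by
          rw [List.take_take, min_eq_left (by omega)]
        rw [h3]
        exact List.take_prefix _ _
      exact h1.isInfix.trans h2.isInfix
    · rintro rfl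
      have hdrop : w.drop (w.length - s.length) = s :=
        (List.suffix_iff_eq_drop.mp hssuf).symm
      rw [hdrop]
      exact List.take_length
  unfold numOcc
  rw [List.filter_congr key]
  have h1 : ((List.range (w.length + 1)).filter (· == w.length - s.length)).length
      = List.count (w.length - s.length) (List.range (w.length + 1)) := by
    rw [List.count_eq_countP, List.countP_eq_length_filter]
  rw [h1]
  exact List.count_eq_one_of_mem List.nodup_range (List.mem_range.mpr (by omega))

end StmtAux

/-- the longest palindromic suffix of a nonempty rich word occurs
exactly once as a factor of it. -/
theorem stmt_10 {α : Type*} [DecidableEq α] (w s : List α) (hw : w ≠ [])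
    (hrich : Rich w) (hs : IsLPS w s) : numOcc s w = 1 := by
  obtain ⟨u, a, rfl⟩ : ∃ u a, w = u ++ [a] := by
    rcases List.eq_nil_or_concat w with h | ⟨u, a, h⟩
    · exact absurd h hw
    · exact ⟨u, a, by simpa [List.concat_eq_append] using h⟩
  have hnot : s ∉ palFactors (u ++ [a]).dropLast := by
    rw [List.dropLast_concat]
    exact StmtAux.lps_not_in_prefix hrich hs
  exact StmtAux.numOcc_eq_one hs.1 hs.2.1 hs.2.2.1 hw hnot
end

section
/- Let f be concave and non-decreasing on (0,∞) with f > 0. For a positive integer n and positive integer p, p·f(n/(2p) + 1) ≤ (p+1)·f(n/(2(p+1)) + 1). Consequently, the maximum over 1 ≤ p ≤ L of p·f(n/(2p)+1) is attained at p = L. -/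
/-- for `f` concave, non-decreasing and positive on `(0,∞)`,
`p·f(n/(2p)+1) ≤ (p+1)·f(n/(2(p+1))+1)`; consequently the maximum of
`p·f(n/(2p)+1)` over `1 ≤ p ≤ L` is attained at `p = L`. -/
theorem stmt_17 (f : ℝ → ℝ) (hconc : ConcaveOn ℝ (Set.Ioi (0 : ℝ)) f)
    (hmono : MonotoneOn f (Set.Ioi (0 : ℝ))) (hpos : ∀ x : ℝ, 0 < x → 0 < f x)
    (n : ℕ) (hn : 0 < n) :
    (∀ p : ℕ, 0 < p →
        (p : ℝ) * f ((n : ℝ) / (2 * (p : ℝ)) + 1) ≤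
          ((p : ℝ) + 1) * f ((n : ℝ) / (2 * ((p : ℝ) + 1)) + 1)) ∧
      ∀ L : ℕ, 0 < L → ∀ p ∈ Finset.Icc 1 L,
        (p : ℝ) * f ((n : ℝ) / (2 * (p : ℝ)) + 1) ≤
          (L : ℝ) * f ((n : ℝ) / (2 * (L : ℝ)) + 1) := by
  have key : ∀ p : ℕ, 0 < p →
      (p : ℝ) * f ((n : ℝ) / (2 * (p : ℝ)) + 1) ≤
        ((p : ℝ) + 1) * f ((n : ℝ) / (2 * ((p : ℝ) + 1)) + 1) := by
    intro p hp
    have hp' : (0:ℝ) < p := Nat.cast_pos.mpr hp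
    have hn' : (0:ℝ) ≤ n := Nat.cast_nonneg n
    have hx : ((n:ℝ)/(2*(p:ℝ))+1) ∈ Set.Ioi (0:ℝ) := by
      simp only [Set.mem_Ioi]; positivity
    have hy : (1:ℝ) ∈ Set.Ioi (0:ℝ) := by norm_num
    have ha : (0:ℝ) ≤ (p:ℝ)/((p:ℝ)+1) := by positivity
    have hb : (0:ℝ) ≤ 1/((p:ℝ)+1) := by positivity
    have hab : (p:ℝ)/((p:ℝ)+1) + 1/((p:ℝ)+1) = 1 := by field_simp
    have h := hconc.2 hx hy ha hb hab
    have heq : ((p:ℝ)/((p:ℝ)+1)) • ((n:ℝ)/(2*(p:ℝ))+1) + (1/((p:ℝ)+1)) • (1:ℝ)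
        = (n:ℝ)/(2*((p:ℝ)+1)) + 1 := by
      simp only [smul_eq_mul]
      field_simp
      ring
    rw [heq] at h
    simp only [smul_eq_mul] at h
    have hf1 : 0 < f 1 := hpos 1 one_pos
    have hp1 : (0:ℝ) < (p:ℝ)+1 := by positivity
    have h2 : (p:ℝ)/((p:ℝ)+1) * f ((n:ℝ)/(2*(p:ℝ))+1) ≤ f ((n:ℝ)/(2*((p:ℝ)+1))+1) := by
      nlinarith
    calc (p:ℝ) * f ((n:ℝ)/(2*(p:ℝ))+1)
        = ((p:ℝ)+1) * ((p:ℝ)/((p:ℝ)+1) * f ((n:ℝ)/(2*(p:ℝ))+1)) := by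
          field_simp
      _ ≤ ((p:ℝ)+1) * f ((n:ℝ)/(2*((p:ℝ)+1))+1) := by
          exact mul_le_mul_of_nonneg_left h2 (le_of_lt hp1)
  refine ⟨key, ?_⟩
  intro L hL p hp
  simp only [Finset.mem_Icc] at hp
  obtain ⟨hp1, hpL⟩ := hp
  clear hL
  induction L, hpL using Nat.le_induction with
  | base => exact le_refl _
  | succ m hm ih =>
      refine ih.trans ?_
      have := key m (lt_of_lt_of_le hp1 hm)
      push_cast
      convert this using 2 <;> push_cast <;> ring
end
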